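/- Let f be the decision rule of a soft regression forest with T trees on ℝ^{d_x}, let W_max be an upper bound on the Euclidean norms ‖w_{i,t}‖ of all internal-node weight vectors, let Π_max be an upper bound on the Euclidean norms ‖π_{l,t}‖ of all leaf decision vectors, and let D_max ≥ 1 be such that every root-to-leaf path in every tree contains at most D_max − 1 internal nodes. Then f is Lipschitz smooth with constant S = W_max² · Π_max · (D_max − 1)(D_max − 3/4); that is, f is continuously differentiable and its Jacobian satisfies ‖J_f(x₁) − J_f(x₂)‖ ≤ W_max² Π_max (D_max − 1)(D_max − 3/4) · ‖x₁ − x₂‖ for all x₁, x₂ ∈ ℝ^{d_x}. -/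

import Mathlib

open scoped BigOperators

/-- The sigmoid function `S(z) = 1/(1+e^{-z})`. -/
noncomputable def sigmoid (z : ℝ) : ℝ := 1 / (1 + Real.exp (-z))

/-- Route probability of the leaf indexed by `l : Fin D → Bool` in a full binary soft
regression tree of depth `D` on `ℝ^{d_x}`.  Internal nodes are indexed by the boolean
prefix (of length `< D`) describing the root-to-node path; `l k = true` means the path
to leaf `l` goes left at level `k` (factor `S(wᵀx + b)`), `l k = false` means it goes
right (factor `1 - S(wᵀx + b)`). -/
noncomputable def routeProb (dx D : ℕ)
    (w : List Bool → EuclideanSpace ℝ (Fin dx)) (b : List Bool → ℝ)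
    (l : Fin D → Bool) (x : EuclideanSpace ℝ (Fin dx)) : ℝ :=
  ∏ k : Fin D,
    if l k then
      sigmoid ((inner ℝ (w ((List.ofFn l).take (k : ℕ))) x : ℝ) + b ((List.ofFn l).take (k : ℕ)))
    else
      1 - sigmoid ((inner ℝ (w ((List.ofFn l).take (k : ℕ))) x : ℝ) + b ((List.ofFn l).take (k : ℕ)))

set_option synthInstance.maxHeartbeats 1000000
set_option maxHeartbeats 2000000

lemma one_add_exp_pos (z : ℝ) : 0 < 1 + Real.exp (-z) := by positivity

lemma sigmoid_pos (z : ℝ) : 0 < sigmoid z := by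
  unfold sigmoid; positivity

lemma sigmoid_lt_one (z : ℝ) : sigmoid z < 1 := by
  unfold sigmoid
  rw [div_lt_one (one_add_exp_pos z)]
  have := Real.exp_pos (-z); linarith

lemma hasDerivAt_sigmoid (z : ℝ) :
    HasDerivAt sigmoid (sigmoid z * (1 - sigmoid z)) z := by
  have h1 : HasDerivAt (fun z : ℝ => 1 + Real.exp (-z)) (-Real.exp (-z)) z := by
    simpa using ((Real.hasDerivAt_exp (-z)).comp z (hasDerivAt_neg z)).const_add 1
  have h2 := h1.inv (ne_of_gt (one_add_exp_pos z))
  have : HasDerivAt (fun z : ℝ => (1 + Real.exp (-z))⁻¹)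
      (Real.exp (-z) / (1 + Real.exp (-z)) ^ 2) z := by
    exact h2.congr_deriv (by rw [neg_neg])
  have hfun : sigmoid = fun z : ℝ => (1 + Real.exp (-z))⁻¹ := by
    funext t; unfold sigmoid; rw [one_div]
  rw [hfun]
  convert this using 1
  beta_reduce
  have hp := one_add_exp_pos z
  field_simp
  ring

lemma sigmoid_deriv_bounds (z : ℝ) :
    0 ≤ sigmoid z * (1 - sigmoid z) ∧ sigmoid z * (1 - sigmoid z) ≤ 1 / 4 := by
  have h1 := sigmoid_pos z
  have h2 := sigmoid_lt_one z
  constructor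
  · nlinarith
  · nlinarith [sq_nonneg (sigmoid z - 1/2)]

lemma sigmoid_lipschitz (a b : ℝ) : |sigmoid a - sigmoid b| ≤ 1 / 4 * |a - b| := by
  have key : ∀ x y : ℝ, ‖sigmoid y - sigmoid x‖ ≤ 1/4 * ‖y - x‖ := by
    intro x y
    apply Convex.norm_image_sub_le_of_norm_hasDerivWithin_le
      (f' := fun z => sigmoid z * (1 - sigmoid z)) (s := Set.univ)
      (fun z _ => (hasDerivAt_sigmoid z).hasDerivWithinAt) ?_ convex_univ trivial trivial
    intro z _
    rw [Real.norm_eq_abs, abs_of_nonneg (sigmoid_deriv_bounds z).1]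
    exact (sigmoid_deriv_bounds z).2
  simpa [Real.norm_eq_abs] using key b a

lemma sigmoid_deriv_lipschitz (a b : ℝ) :
    |sigmoid a * (1 - sigmoid a) - sigmoid b * (1 - sigmoid b)| ≤ 1 / 4 * |a - b| := by
  have h : sigmoid a * (1 - sigmoid a) - sigmoid b * (1 - sigmoid b)
      = (sigmoid a - sigmoid b) * (1 - sigmoid a - sigmoid b) := by ring
  rw [h, abs_mul]
  have h1 := sigmoid_pos a; have h2 := sigmoid_lt_one a
  have h3 := sigmoid_pos b; have h4 := sigmoid_lt_one b
  have habs : |1 - sigmoid a - sigmoid b| ≤ 1 := by rw [abs_le]; constructor <;> linarith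
  have := sigmoid_lipschitz a b
  nlinarith [abs_nonneg (sigmoid a - sigmoid b), abs_nonneg (a-b)]


noncomputable def treeFun (dx dz D : ℕ)
    (w : List Bool → EuclideanSpace ℝ (Fin dx)) (b : List Bool → ℝ)
    (leaf : (Fin D → Bool) → EuclideanSpace ℝ (Fin dz))
    (x : EuclideanSpace ℝ (Fin dx)) : EuclideanSpace ℝ (Fin dz) :=
  ∑ l : Fin D → Bool, routeProb dx D w b l x • leaf l

lemma treeFun_zero (dx dz : ℕ) (w : List Bool → EuclideanSpace ℝ (Fin dx))
    (b : List Bool → ℝ) (leaf : (Fin 0 → Bool) → EuclideanSpace ℝ (Fin dz))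
    (x : EuclideanSpace ℝ (Fin dx)) :
    treeFun dx dz 0 w b leaf x = leaf default := by
  rw [treeFun, Fintype.sum_unique, routeProb]
  simp only [Finset.univ_eq_empty, Finset.prod_empty, one_smul]
  exact congrArg leaf (Subsingleton.elim _ _)

lemma routeProb_cons (dx D : ℕ) (w : List Bool → EuclideanSpace ℝ (Fin dx))
    (b : List Bool → ℝ) (c : Bool) (l : Fin D → Bool) (x : EuclideanSpace ℝ (Fin dx)) :
    routeProb dx (D+1) w b (Fin.cons c l) x =
      (if c then sigmoid ((inner ℝ (w []) x : ℝ) + b [])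
        else 1 - sigmoid ((inner ℝ (w []) x : ℝ) + b [])) *
      routeProb dx D (fun p => w (c :: p)) (fun p => b (c :: p)) l x := by
  unfold routeProb
  rw [Fin.prod_univ_succ]
  have hof : List.ofFn (Fin.cons c l) = c :: List.ofFn l := by
    rw [List.ofFn_succ]; simp
  congr 1
  apply Finset.prod_congr rfl
  intro k _
  simp [hof, Fin.cons_succ, List.take_succ_cons]

lemma treeFun_succ (dx dz D : ℕ) (w : List Bool → EuclideanSpace ℝ (Fin dx))
    (b : List Bool → ℝ) (leaf : (Fin (D+1) → Bool) → EuclideanSpace ℝ (Fin dz))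
    (x : EuclideanSpace ℝ (Fin dx)) :
    treeFun dx dz (D+1) w b leaf x =
      sigmoid ((inner ℝ (w []) x : ℝ) + b []) •
        treeFun dx dz D (fun p => w (true :: p)) (fun p => b (true :: p))
          (fun l => leaf (Fin.cons true l)) x
      + (1 - sigmoid ((inner ℝ (w []) x : ℝ) + b [])) •
        treeFun dx dz D (fun p => w (false :: p)) (fun p => b (false :: p))
          (fun l => leaf (Fin.cons false l)) x := by
  unfold treeFun
  rw [← Fintype.sum_equiv (Fin.consEquiv (fun _ : Fin (D+1) => Bool))
    (fun p : Bool × (Fin D → Bool) =>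
      routeProb dx (D+1) w b (Fin.cons p.1 p.2) x • leaf (Fin.cons p.1 p.2))
    (fun l => routeProb dx (D+1) w b l x • leaf l) (fun p => rfl)]
  rw [Fintype.sum_prod_type, Fintype.sum_bool]
  congr 1
  · rw [Finset.smul_sum]
    apply Finset.sum_congr rfl
    intro l _
    rw [routeProb_cons, if_pos rfl, smul_smul]
  · rw [Finset.smul_sum]
    apply Finset.sum_congr rfl
    intro l _
    rw [routeProb_cons]
    simp [smul_smul]
set_option synthInstance.maxHeartbeats 1000000
set_option maxHeartbeats 2000000
variable {E F : Type*} [NormedAddCommGroup E] [InnerProductSpace ℝ E]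
  [NormedAddCommGroup F] [NormedSpace ℝ F]

lemma convex_comb_sub (s t : ℝ) (a b c d : F) :
    (s • a + (1 - s) • b) - (t • c + (1 - t) • d)
      = s • (a - c) + (1 - s) • (b - d) + (s - t) • (c - d) := by
  module

lemma phi_decomp (s t : ℝ) (p q : E →L[ℝ] ℝ) (at' ay bf bg : E →L[ℝ] F)
    (gtx gty gfx gfy : F) :
    (s • at' + p.smulRight gtx + ((1 - s) • bf + (0 - p).smulRight gfx))
      - (t • ay + q.smulRight gty + ((1 - t) • bg + (0 - q).smulRight gfy))
    = (s • (at' - ay) + (s - t) • ay)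
      + ((1 - s) • (bf - bg) + (t - s) • bg)
      + ((p - q).smulRight gtx + q.smulRight (gtx - gty))
      + ((0 - (p - q)).smulRight gfx + q.smulRight (gfy - gfx)) := by
  ext ξ
  simp only [ContinuousLinearMap.coe_sub', Pi.sub_apply, ContinuousLinearMap.add_apply,
    ContinuousLinearMap.coe_smul', Pi.smul_apply, ContinuousLinearMap.smulRight_apply,
    ContinuousLinearMap.sub_apply, ContinuousLinearMap.zero_apply]
  module

/-- Key combination step: gating two well-behaved functions through a sigmoid. -/
lemma gate_combine (W P a c : ℝ) (hW0 : 0 ≤ W)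
    (v : E) (β : ℝ) (hv : ‖v‖ ≤ W) (Gt Gf : E → F)
    (dGt : Differentiable ℝ Gt) (dGf : Differentiable ℝ Gf)
    (vGt : ∀ x, ‖Gt x‖ ≤ P) (vGf : ∀ x, ‖Gf x‖ ≤ P)
    (lGt : ∀ x y, ‖Gt x - Gt y‖ ≤ a * ‖x - y‖) (lGf : ∀ x y, ‖Gf x - Gf y‖ ≤ a * ‖x - y‖)
    (bGt : ∀ x, ‖fderiv ℝ Gt x‖ ≤ a) (bGf : ∀ x, ‖fderiv ℝ Gf x‖ ≤ a)
    (cGt : ∀ x y, ‖fderiv ℝ Gt x - fderiv ℝ Gt y‖ ≤ c * ‖x - y‖)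
    (cGf : ∀ x y, ‖fderiv ℝ Gf x - fderiv ℝ Gf y‖ ≤ c * ‖x - y‖) :
    Differentiable ℝ (fun x => sigmoid ((inner ℝ v x : ℝ) + β) • Gt x
        + (1 - sigmoid ((inner ℝ v x : ℝ) + β)) • Gf x) ∧
    (∀ x, ‖sigmoid ((inner ℝ v x : ℝ) + β) • Gt x
        + (1 - sigmoid ((inner ℝ v x : ℝ) + β)) • Gf x‖ ≤ P) ∧
    (∀ x y, ‖(sigmoid ((inner ℝ v x : ℝ) + β) • Gt x
        + (1 - sigmoid ((inner ℝ v x : ℝ) + β)) • Gf x)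
      - (sigmoid ((inner ℝ v y : ℝ) + β) • Gt y
        + (1 - sigmoid ((inner ℝ v y : ℝ) + β)) • Gf y)‖ ≤ (a + W * P / 2) * ‖x - y‖) ∧
    (∀ x, ‖fderiv ℝ (fun x => sigmoid ((inner ℝ v x : ℝ) + β) • Gt x
        + (1 - sigmoid ((inner ℝ v x : ℝ) + β)) • Gf x) x‖ ≤ a + W * P / 2) ∧
    (∀ x y, ‖fderiv ℝ (fun x => sigmoid ((inner ℝ v x : ℝ) + β) • Gt x
          + (1 - sigmoid ((inner ℝ v x : ℝ) + β)) • Gf x) x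
        - fderiv ℝ (fun x => sigmoid ((inner ℝ v x : ℝ) + β) • Gt x
          + (1 - sigmoid ((inner ℝ v x : ℝ) + β)) • Gf x) y‖
      ≤ (c + W * a + W ^ 2 * P / 2) * ‖x - y‖) := by
  set u : E → ℝ := fun x => (inner ℝ v x : ℝ) + β with hu_def
  set dh : E → (E →L[ℝ] ℝ) :=
    fun x => (sigmoid (u x) * (1 - sigmoid (u x))) • innerSL ℝ v with hdh_def
  have hdh_app : ∀ x, dh x = (sigmoid (u x) * (1 - sigmoid (u x))) • innerSL ℝ v :=
    fun _ => rfl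
  have hu' : ∀ x, HasFDerivAt u (innerSL ℝ v) x := fun x =>
    ((innerSL ℝ v).hasFDerivAt (x := x)).add_const β
  have hh : ∀ x, HasFDerivAt (fun x => sigmoid (u x)) (dh x) x := fun x =>
    (hasDerivAt_sigmoid (u x)).comp_hasFDerivAt x (hu' x)
  set G : E → F := fun x => sigmoid (u x) • Gt x + (1 - sigmoid (u x)) • Gf x with hG_def
  set Φ : E → (E →L[ℝ] F) :=
    fun x => (sigmoid (u x) • fderiv ℝ Gt x + (dh x).smulRight (Gt x))
      + ((1 - sigmoid (u x)) • fderiv ℝ Gf x + (0 - dh x).smulRight (Gf x)) with hΦ_def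
  have hΦ_app : ∀ x, Φ x = (sigmoid (u x) • fderiv ℝ Gt x + (dh x).smulRight (Gt x))
      + ((1 - sigmoid (u x)) • fderiv ℝ Gf x + (0 - dh x).smulRight (Gf x)) := fun _ => rfl
  have hΦ : ∀ x, HasFDerivAt G (Φ x) x := fun x =>
    ((hh x).smul (dGt x).hasFDerivAt).add
      (((hasFDerivAt_const (1:ℝ) x).sub (hh x)).smul (dGf x).hasFDerivAt)
  have hfd : ∀ x, fderiv ℝ G x = Φ x := fun x => (hΦ x).fderiv
  have hs0 : ∀ x, 0 ≤ sigmoid (u x) := fun x => (sigmoid_pos (u x)).le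
  have hs1 : ∀ x, sigmoid (u x) ≤ 1 := fun x => (sigmoid_lt_one (u x)).le
  have hdh_norm : ∀ x, ‖dh x‖ ≤ W / 4 := by
    intro x
    rw [hdh_app x, norm_smul (sigmoid (u x) * (1 - sigmoid (u x))) (innerSL ℝ v), innerSL_apply_norm, Real.norm_eq_abs,
      abs_of_nonneg (sigmoid_deriv_bounds (u x)).1]
    calc sigmoid (u x) * (1 - sigmoid (u x)) * ‖v‖ ≤ 1 / 4 * W :=
          mul_le_mul (sigmoid_deriv_bounds (u x)).2 hv (norm_nonneg v) (by norm_num)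
      _ = W / 4 := by ring
  have hu_lip : ∀ x y, |u x - u y| ≤ W * ‖x - y‖ := by
    intro x y
    have h : u x - u y = (inner ℝ v (x - y) : ℝ) := by
      simp [hu_def, inner_sub_right]
    rw [h]
    calc |(inner ℝ v (x - y) : ℝ)| ≤ ‖v‖ * ‖x - y‖ := abs_real_inner_le_norm v (x - y)
      _ ≤ W * ‖x - y‖ := mul_le_mul_of_nonneg_right hv (norm_nonneg _)
  have hh_lip : ∀ x y, |sigmoid (u x) - sigmoid (u y)| ≤ W / 4 * ‖x - y‖ := by
    intro x y
    calc |sigmoid (u x) - sigmoid (u y)| ≤ 1 / 4 * |u x - u y| := sigmoid_lipschitz _ _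
      _ ≤ 1 / 4 * (W * ‖x - y‖) := by have := hu_lip x y; linarith
      _ = W / 4 * ‖x - y‖ := by ring
  have hdh_lip : ∀ x y, ‖dh x - dh y‖ ≤ W ^ 2 / 4 * ‖x - y‖ := by
    intro x y
    have hss : (sigmoid (u x) * (1 - sigmoid (u x))) • innerSL ℝ v - (sigmoid (u y) * (1 - sigmoid (u y))) • innerSL ℝ v
        = (sigmoid (u x) * (1 - sigmoid (u x)) - sigmoid (u y) * (1 - sigmoid (u y))) • innerSL ℝ v :=
      (sub_smul _ _ _).symm
    rw [hdh_app x, hdh_app y, hss, norm_smul (sigmoid (u x) * (1 - sigmoid (u x)) - sigmoid (u y) * (1 - sigmoid (u y))) (innerSL ℝ v), innerSL_apply_norm, Real.norm_eq_abs]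
    calc |sigmoid (u x) * (1 - sigmoid (u x)) - sigmoid (u y) * (1 - sigmoid (u y))| * ‖v‖
        ≤ (1 / 4 * |u x - u y|) * W :=
          mul_le_mul (sigmoid_deriv_lipschitz _ _) hv (norm_nonneg v) (by positivity)
      _ ≤ (1 / 4 * (W * ‖x - y‖)) * W := by
          have := hu_lip x y
          nlinarith [abs_nonneg (u x - u y)]
      _ = W ^ 2 / 4 * ‖x - y‖ := by ring
  refine ⟨fun x => (hΦ x).differentiableAt, ?_, ?_, ?_, ?_⟩
  -- value bound
  · intro x
    have h1 := mul_le_mul_of_nonneg_left (vGt x) (hs0 x)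
    have h2 := mul_le_mul_of_nonneg_left (vGf x)
      (by linarith [hs1 x] : (0:ℝ) ≤ 1 - sigmoid (u x))
    calc ‖sigmoid (u x) • Gt x + (1 - sigmoid (u x)) • Gf x‖
        ≤ ‖sigmoid (u x) • Gt x‖ + ‖(1 - sigmoid (u x)) • Gf x‖ := norm_add_le _ _
      _ ≤ sigmoid (u x) * P + (1 - sigmoid (u x)) * P := by
          rw [norm_smul, norm_smul, Real.norm_eq_abs, Real.norm_eq_abs,
            abs_of_nonneg (hs0 x),
            abs_of_nonneg (by linarith [hs1 x] : (0:ℝ) ≤ 1 - sigmoid (u x))]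
          linarith
      _ = P := by ring
  -- value Lipschitz
  · intro x y
    rw [convex_comb_sub]
    have h1 : ‖sigmoid (u x) • (Gt x - Gt y)‖ ≤ sigmoid (u x) * (a * ‖x - y‖) := by
      rw [norm_smul, Real.norm_eq_abs, abs_of_nonneg (hs0 x)]
      exact mul_le_mul_of_nonneg_left (lGt x y) (hs0 x)
    have h2 : ‖(1 - sigmoid (u x)) • (Gf x - Gf y)‖
        ≤ (1 - sigmoid (u x)) * (a * ‖x - y‖) := by
      rw [norm_smul, Real.norm_eq_abs,
        abs_of_nonneg (by linarith [hs1 x] : (0:ℝ) ≤ 1 - sigmoid (u x))]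
      exact mul_le_mul_of_nonneg_left (lGf x y) (by linarith [hs1 x])
    have h3 : ‖(sigmoid (u x) - sigmoid (u y)) • (Gt y - Gf y)‖
        ≤ (W / 4 * ‖x - y‖) * (2 * P) := by
      rw [norm_smul, Real.norm_eq_abs]
      refine mul_le_mul (hh_lip x y) ?_ (norm_nonneg _)
        (mul_nonneg (by positivity) (norm_nonneg _))
      calc ‖Gt y - Gf y‖ ≤ ‖Gt y‖ + ‖Gf y‖ := norm_sub_le _ _
        _ ≤ 2 * P := by have := vGt y; have := vGf y; linarith
    have tri : ‖sigmoid (u x) • (Gt x - Gt y) + (1 - sigmoid (u x)) • (Gf x - Gf y)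
          + (sigmoid (u x) - sigmoid (u y)) • (Gt y - Gf y)‖
        ≤ ‖sigmoid (u x) • (Gt x - Gt y)‖ + ‖(1 - sigmoid (u x)) • (Gf x - Gf y)‖
          + ‖(sigmoid (u x) - sigmoid (u y)) • (Gt y - Gf y)‖ := by
      refine le_trans (norm_add_le _ _) ?_
      have := norm_add_le (sigmoid (u x) • (Gt x - Gt y))
        ((1 - sigmoid (u x)) • (Gf x - Gf y))
      linarith
    have hsum : sigmoid (u x) * (a * ‖x - y‖) + (1 - sigmoid (u x)) * (a * ‖x - y‖)
        + (W / 4 * ‖x - y‖) * (2 * P) = (a + W * P / 2) * ‖x - y‖ := by ring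
    linarith
  -- fderiv bound
  · intro x
    rw [hfd x, hΦ_app x]
    have h1 : ‖sigmoid (u x) • fderiv ℝ Gt x‖ ≤ sigmoid (u x) * a := by
      rw [norm_smul (sigmoid (u x)) (fderiv ℝ Gt x), Real.norm_eq_abs, abs_of_nonneg (hs0 x)]
      exact mul_le_mul_of_nonneg_left (bGt x) (hs0 x)
    have h2 : ‖(dh x).smulRight (Gt x)‖ ≤ W / 4 * P := by
      rw [ContinuousLinearMap.norm_smulRight_apply]
      exact mul_le_mul (hdh_norm x) (vGt x) (norm_nonneg _) (by positivity)
    have h3 : ‖(1 - sigmoid (u x)) • fderiv ℝ Gf x‖ ≤ (1 - sigmoid (u x)) * a := by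
      rw [norm_smul (1 - sigmoid (u x)) (fderiv ℝ Gf x), Real.norm_eq_abs,
        abs_of_nonneg (by linarith [hs1 x] : (0:ℝ) ≤ 1 - sigmoid (u x))]
      exact mul_le_mul_of_nonneg_left (bGf x) (by linarith [hs1 x])
    have h4 : ‖(0 - dh x).smulRight (Gf x)‖ ≤ W / 4 * P := by
      rw [ContinuousLinearMap.norm_smulRight_apply, zero_sub, norm_neg]
      exact mul_le_mul (hdh_norm x) (vGf x) (norm_nonneg _) (by positivity)
    have tri : ‖(sigmoid (u x) • fderiv ℝ Gt x + (dh x).smulRight (Gt x))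
        + ((1 - sigmoid (u x)) • fderiv ℝ Gf x + (0 - dh x).smulRight (Gf x))‖
        ≤ ‖sigmoid (u x) • fderiv ℝ Gt x‖ + ‖(dh x).smulRight (Gt x)‖
          + (‖(1 - sigmoid (u x)) • fderiv ℝ Gf x‖ + ‖(0 - dh x).smulRight (Gf x)‖) :=
      le_trans (norm_add_le _ _) (add_le_add (norm_add_le _ _) (norm_add_le _ _))
    have hsum : sigmoid (u x) * a + W / 4 * P + ((1 - sigmoid (u x)) * a + W / 4 * P)
        = a + W * P / 2 := by ring
    linarith
  -- fderiv Lipschitz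
  · intro x y
    rw [hfd x, hfd y, hΦ_app x, hΦ_app y,
      phi_decomp (sigmoid (u x)) (sigmoid (u y)) (dh x) (dh y)
        (fderiv ℝ Gt x) (fderiv ℝ Gt y) (fderiv ℝ Gf x) (fderiv ℝ Gf y)
        (Gt x) (Gt y) (Gf x) (Gf y)]
    have hA_bd : ‖sigmoid (u x) • (fderiv ℝ Gt x - fderiv ℝ Gt y)
          + (sigmoid (u x) - sigmoid (u y)) • fderiv ℝ Gt y‖
        ≤ sigmoid (u x) * (c * ‖x - y‖) + (W / 4 * ‖x - y‖) * a := by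
      refine le_trans (norm_add_le _ _) (add_le_add ?_ ?_)
      · rw [norm_smul (sigmoid (u x)) (fderiv ℝ Gt x - fderiv ℝ Gt y), Real.norm_eq_abs,
          abs_of_nonneg (hs0 x)]
        exact mul_le_mul_of_nonneg_left (cGt x y) (hs0 x)
      · rw [norm_smul (sigmoid (u x) - sigmoid (u y)) (fderiv ℝ Gt y), Real.norm_eq_abs]
        exact mul_le_mul (hh_lip x y) (bGt y) (norm_nonneg _)
          (mul_nonneg (by positivity) (norm_nonneg _))
    have hB_bd : ‖(1 - sigmoid (u x)) • (fderiv ℝ Gf x - fderiv ℝ Gf y)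
          + (sigmoid (u y) - sigmoid (u x)) • fderiv ℝ Gf y‖
        ≤ (1 - sigmoid (u x)) * (c * ‖x - y‖) + (W / 4 * ‖x - y‖) * a := by
      refine le_trans (norm_add_le _ _) (add_le_add ?_ ?_)
      · rw [norm_smul (1 - sigmoid (u x)) (fderiv ℝ Gf x - fderiv ℝ Gf y), Real.norm_eq_abs,
          abs_of_nonneg (by linarith [hs1 x] : (0:ℝ) ≤ 1 - sigmoid (u x))]
        exact mul_le_mul_of_nonneg_left (cGf x y) (by linarith [hs1 x])
      · rw [norm_smul (sigmoid (u y) - sigmoid (u x)) (fderiv ℝ Gf y), Real.norm_eq_abs,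
          abs_sub_comm]
        exact mul_le_mul (hh_lip x y) (bGf y) (norm_nonneg _)
          (mul_nonneg (by positivity) (norm_nonneg _))
    have hC_bd : ‖(dh x - dh y).smulRight (Gt x) + (dh y).smulRight (Gt x - Gt y)‖
        ≤ (W ^ 2 / 4 * ‖x - y‖) * P + (W / 4) * (a * ‖x - y‖) := by
      refine le_trans (norm_add_le _ _) (add_le_add ?_ ?_)
      · rw [ContinuousLinearMap.norm_smulRight_apply]
        exact mul_le_mul (hdh_lip x y) (vGt x) (norm_nonneg _)
          (mul_nonneg (by positivity) (norm_nonneg _))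
      · rw [ContinuousLinearMap.norm_smulRight_apply]
        exact mul_le_mul (hdh_norm y) (lGt x y) (norm_nonneg _) (by positivity)
    have hD_bd : ‖(0 - (dh x - dh y)).smulRight (Gf x) + (dh y).smulRight (Gf y - Gf x)‖
        ≤ (W ^ 2 / 4 * ‖x - y‖) * P + (W / 4) * (a * ‖x - y‖) := by
      refine le_trans (norm_add_le _ _) (add_le_add ?_ ?_)
      · rw [ContinuousLinearMap.norm_smulRight_apply, zero_sub, norm_neg]
        exact mul_le_mul (hdh_lip x y) (vGf x) (norm_nonneg _)
          (mul_nonneg (by positivity) (norm_nonneg _))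
      · rw [ContinuousLinearMap.norm_smulRight_apply, norm_sub_rev]
        exact mul_le_mul (hdh_norm y) (lGf x y) (norm_nonneg _) (by positivity)
    set A := sigmoid (u x) • (fderiv ℝ Gt x - fderiv ℝ Gt y)
      + (sigmoid (u x) - sigmoid (u y)) • fderiv ℝ Gt y
    set B := (1 - sigmoid (u x)) • (fderiv ℝ Gf x - fderiv ℝ Gf y)
      + (sigmoid (u y) - sigmoid (u x)) • fderiv ℝ Gf y
    set Cc := (dh x - dh y).smulRight (Gt x) + (dh y).smulRight (Gt x - Gt y)
    set Dd := (0 - (dh x - dh y)).smulRight (Gf x) + (dh y).smulRight (Gf y - Gf x)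
    have tri : ‖A + B + Cc + Dd‖ ≤ ‖A‖ + ‖B‖ + ‖Cc‖ + ‖Dd‖ := by
      calc ‖A + B + Cc + Dd‖ ≤ ‖A + B + Cc‖ + ‖Dd‖ := norm_add_le _ _
        _ ≤ ‖A + B‖ + ‖Cc‖ + ‖Dd‖ := by have := norm_add_le (A + B) Cc; linarith
        _ ≤ ‖A‖ + ‖B‖ + ‖Cc‖ + ‖Dd‖ := by have := norm_add_le A B; linarith
    have hsum : sigmoid (u x) * (c * ‖x - y‖) + (W / 4 * ‖x - y‖) * a
        + ((1 - sigmoid (u x)) * (c * ‖x - y‖) + (W / 4 * ‖x - y‖) * a)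
        + ((W ^ 2 / 4 * ‖x - y‖) * P + (W / 4) * (a * ‖x - y‖))
        + ((W ^ 2 / 4 * ‖x - y‖) * P + (W / 4) * (a * ‖x - y‖))
        = (c + W * a + W ^ 2 * P / 2) * ‖x - y‖ := by ring
    linarith

lemma tree_main (dx dz : ℕ) (W P : ℝ) (hW0 : 0 ≤ W) (hP0 : 0 ≤ P) :
    ∀ (D : ℕ) (w : List Bool → EuclideanSpace ℝ (Fin dx)) (b : List Bool → ℝ)
      (leaf : (Fin D → Bool) → EuclideanSpace ℝ (Fin dz)),
      (∀ pre : List Bool, pre.length < D → ‖w pre‖ ≤ W) →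
      (∀ l, ‖leaf l‖ ≤ P) →
      Differentiable ℝ (treeFun dx dz D w b leaf) ∧
      (∀ x, ‖treeFun dx dz D w b leaf x‖ ≤ P) ∧
      (∀ x y, ‖treeFun dx dz D w b leaf x - treeFun dx dz D w b leaf y‖ ≤
        (D : ℝ) * (W * P / 2) * ‖x - y‖) ∧
      (∀ x, ‖fderiv ℝ (treeFun dx dz D w b leaf) x‖ ≤ (D : ℝ) * (W * P / 2)) ∧
      (∀ x y, ‖fderiv ℝ (treeFun dx dz D w b leaf) x - fderiv ℝ (treeFun dx dz D w b leaf) y‖ ≤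
        (D : ℝ) * ((D : ℝ) + 1) / 4 * (W ^ 2 * P) * ‖x - y‖) := by
  intro D
  induction D with
  | zero =>
    intro w b leaf hw hl
    have hconst : treeFun dx dz 0 w b leaf = fun _ => leaf default :=
      funext fun x => treeFun_zero dx dz w b leaf x
    rw [hconst]
    refine ⟨differentiable_const _, fun x => hl _, fun x y => ?_, fun x => ?_, fun x y => ?_⟩
    · simp
    · simp [fderiv_const]
    · simp [fderiv_const]
  | succ D IH =>
    intro w b leaf hw hl
    have hv : ‖w []‖ ≤ W := hw [] (by simp)
    obtain ⟨dGt, vGt, lGt, bGt, cGt⟩ := IH (fun p => w (true :: p)) (fun p => b (true :: p))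
      (fun l => leaf (Fin.cons true l)) (fun pre hpre => hw _ (by simpa using hpre)) (fun l => hl _)
    obtain ⟨dGf, vGf, lGf, bGf, cGf⟩ := IH (fun p => w (false :: p)) (fun p => b (false :: p))
      (fun l => leaf (Fin.cons false l)) (fun pre hpre => hw _ (by simpa using hpre)) (fun l => hl _)
    have hFeq : treeFun dx dz (D+1) w b leaf
        = fun x => sigmoid ((inner ℝ (w []) x : ℝ) + b []) •
            treeFun dx dz D (fun p => w (true :: p)) (fun p => b (true :: p))
              (fun l => leaf (Fin.cons true l)) x
          + (1 - sigmoid ((inner ℝ (w []) x : ℝ) + b [])) •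
            treeFun dx dz D (fun p => w (false :: p)) (fun p => b (false :: p))
              (fun l => leaf (Fin.cons false l)) x :=
      funext fun x => treeFun_succ dx dz D w b leaf x
    rw [hFeq]
    obtain ⟨gd, gv, gl, gb, gc⟩ := gate_combine W P ((D:ℝ) * (W * P / 2))
      ((D:ℝ) * ((D:ℝ) + 1) / 4 * (W ^ 2 * P)) hW0 (w []) (b []) hv
      (treeFun dx dz D (fun p => w (true :: p)) (fun p => b (true :: p))
        (fun l => leaf (Fin.cons true l)))
      (treeFun dx dz D (fun p => w (false :: p)) (fun p => b (false :: p))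
        (fun l => leaf (Fin.cons false l)))
      dGt dGf vGt vGf lGt lGf bGt bGf cGt cGf
    refine ⟨gd, gv, fun x y => ?_, fun x => ?_, fun x y => ?_⟩
    · refine (gl x y).trans (le_of_eq ?_)
      push_cast; ring
    · refine (gb x).trans (le_of_eq ?_)
      push_cast; ring
    · refine (gc x y).trans (le_of_eq ?_)
      push_cast; ring


/-- The decision rule of a soft regression forest with `T` trees: tree `t` has depth
`Dt t`, internal-node weights `w t`, biases `b t`, and leaf decision vectors
`leaf t l ∈ ℝ^{d_z}`; the output is `f(x) = (1/T) Σ_t Σ_l p_{l,t}(x) · π_{l,t}`. -/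
noncomputable def srf (dx dz T : ℕ) (Dt : Fin T → ℕ)
    (w : Fin T → List Bool → EuclideanSpace ℝ (Fin dx))
    (b : Fin T → List Bool → ℝ)
    (leaf : (t : Fin T) → (Fin (Dt t) → Bool) → EuclideanSpace ℝ (Fin dz))
    (x : EuclideanSpace ℝ (Fin dx)) : EuclideanSpace ℝ (Fin dz) :=
  (T : ℝ)⁻¹ • ∑ t, ∑ l : Fin (Dt t) → Bool, routeProb dx (Dt t) (w t) (b t) l x • leaf t l

/-- The SRF decision rule is Lipschitz smooth with constant
`W_max² · Π_max · (D_max − 1)(D_max − 3/4)`: it is continuously differentiable and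
its Jacobian (Fréchet derivative) is Lipschitz with that constant, where `W_max`
bounds the norms of all internal-node weight vectors, `Π_max` bounds the norms of all
leaf decision vectors, and every root-to-leaf path in every tree contains at most
`D_max − 1` internal nodes. -/
theorem srf_lipschitz_smooth (dx dz T : ℕ) (Dt : Fin T → ℕ)
    (w : Fin T → List Bool → EuclideanSpace ℝ (Fin dx))
    (b : Fin T → List Bool → ℝ)
    (leaf : (t : Fin T) → (Fin (Dt t) → Bool) → EuclideanSpace ℝ (Fin dz))
    (Wmax Pimax : ℝ) (hWmax0 : 0 ≤ Wmax) (hPimax0 : 0 ≤ Pimax)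
    (Dmax : ℕ) (hDmax : 1 ≤ Dmax)
    (hW : ∀ t (pre : List Bool), pre.length < Dt t → ‖w t pre‖ ≤ Wmax)
    (hPi : ∀ t l, ‖leaf t l‖ ≤ Pimax)
    (hdepth : ∀ t, Dt t ≤ Dmax - 1) :
    ContDiff ℝ 1 (srf dx dz T Dt w b leaf) ∧
      ∀ x₁ x₂ : EuclideanSpace ℝ (Fin dx),
        ‖fderiv ℝ (srf dx dz T Dt w b leaf) x₁ - fderiv ℝ (srf dx dz T Dt w b leaf) x₂‖ ≤
          Wmax ^ 2 * Pimax * ((Dmax : ℝ) - 1) * ((Dmax : ℝ) - 3 / 4) * ‖x₁ - x₂‖ := by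
  set C : ℝ := Wmax ^ 2 * Pimax * ((Dmax : ℝ) - 1) * ((Dmax : ℝ) - 3 / 4) with hC_def
  have hm1 : (1:ℝ) ≤ (Dmax:ℝ) := by exact_mod_cast hDmax
  have hC0 : 0 ≤ C := by
    rw [hC_def]
    have h1 : (0:ℝ) ≤ (Dmax:ℝ) - 1 := by linarith
    have h2 : (0:ℝ) ≤ (Dmax:ℝ) - 3/4 := by linarith
    have := mul_nonneg (sq_nonneg Wmax) hPimax0
    positivity
  have pkg := fun t => tree_main dx dz Wmax Pimax hWmax0 hPimax0 (Dt t) (w t) (b t) (leaf t)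
    (hW t) (hPi t)
  have hsrf : srf dx dz T Dt w b leaf
      = fun x => (T:ℝ)⁻¹ • ∑ t, treeFun dx dz (Dt t) (w t) (b t) (leaf t) x := rfl
  have hΨ : ∀ x, HasFDerivAt (srf dx dz T Dt w b leaf)
      ((T:ℝ)⁻¹ • ∑ t, fderiv ℝ (treeFun dx dz (Dt t) (w t) (b t) (leaf t)) x) x := by
    intro x
    rw [hsrf]
    exact (HasFDerivAt.fun_sum (fun t _ => ((pkg t).1 x).hasFDerivAt)).const_smul ((T:ℝ)⁻¹)
  have hfd : ∀ x, fderiv ℝ (srf dx dz T Dt w b leaf) x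
      = (T:ℝ)⁻¹ • ∑ t, fderiv ℝ (treeFun dx dz (Dt t) (w t) (b t) (leaf t)) x :=
    fun x => (hΨ x).fderiv
  -- per-tree constant bound
  have hconst : ∀ t : Fin T,
      ((Dt t : ℝ)) * ((Dt t : ℝ) + 1) / 4 * (Wmax ^ 2 * Pimax) ≤ C := by
    intro t
    have hdt : ((Dt t : ℝ)) ≤ (Dmax : ℝ) - 1 := by
      have h := hdepth t
      have : ((Dt t : ℕ) : ℝ) ≤ ((Dmax - 1 : ℕ) : ℝ) := by exact_mod_cast h
      rwa [Nat.cast_sub hDmax, Nat.cast_one] at this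
    have hd0 : (0:ℝ) ≤ (Dt t : ℝ) := Nat.cast_nonneg _
    have hWP : (0:ℝ) ≤ Wmax ^ 2 * Pimax := mul_nonneg (sq_nonneg _) hPimax0
    have key : ((Dt t : ℝ)) * ((Dt t : ℝ) + 1) / 4
        ≤ ((Dmax : ℝ) - 1) * ((Dmax : ℝ) - 3 / 4) := by
      nlinarith [mul_le_mul hdt hdt hd0 (by linarith : (0:ℝ) ≤ (Dmax:ℝ) - 1)]
    calc ((Dt t : ℝ)) * ((Dt t : ℝ) + 1) / 4 * (Wmax ^ 2 * Pimax)
        ≤ ((Dmax : ℝ) - 1) * ((Dmax : ℝ) - 3 / 4) * (Wmax ^ 2 * Pimax) :=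
          mul_le_mul_of_nonneg_right key hWP
      _ = C := by rw [hC_def]; ring
  -- Lipschitz bound on the Jacobian
  have hlip : ∀ x y : EuclideanSpace ℝ (Fin dx),
      ‖fderiv ℝ (srf dx dz T Dt w b leaf) x - fderiv ℝ (srf dx dz T Dt w b leaf) y‖
        ≤ C * ‖x - y‖ := by
    intro x y
    have hss : (T:ℝ)⁻¹ • ∑ t, fderiv ℝ (treeFun dx dz (Dt t) (w t) (b t) (leaf t)) x
        - (T:ℝ)⁻¹ • ∑ t, fderiv ℝ (treeFun dx dz (Dt t) (w t) (b t) (leaf t)) y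
        = (T:ℝ)⁻¹ • (∑ t, fderiv ℝ (treeFun dx dz (Dt t) (w t) (b t) (leaf t)) x
          - ∑ t, fderiv ℝ (treeFun dx dz (Dt t) (w t) (b t) (leaf t)) y) := (smul_sub _ _ _).symm
    rw [hfd x, hfd y, hss, ← Finset.sum_sub_distrib]
    have hTnn : (0:ℝ) ≤ (T:ℝ)⁻¹ := by positivity
    calc ‖(T:ℝ)⁻¹ • ∑ t, (fderiv ℝ (treeFun dx dz (Dt t) (w t) (b t) (leaf t)) x
            - fderiv ℝ (treeFun dx dz (Dt t) (w t) (b t) (leaf t)) y)‖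
        = (T:ℝ)⁻¹ * ‖∑ t, (fderiv ℝ (treeFun dx dz (Dt t) (w t) (b t) (leaf t)) x
            - fderiv ℝ (treeFun dx dz (Dt t) (w t) (b t) (leaf t)) y)‖ := by
          rw [norm_smul ((T:ℝ)⁻¹) (∑ t, (fderiv ℝ (treeFun dx dz (Dt t) (w t) (b t) (leaf t)) x
            - fderiv ℝ (treeFun dx dz (Dt t) (w t) (b t) (leaf t)) y)),
            Real.norm_eq_abs, abs_of_nonneg hTnn]
      _ ≤ (T:ℝ)⁻¹ * ∑ t, ‖fderiv ℝ (treeFun dx dz (Dt t) (w t) (b t) (leaf t)) x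
            - fderiv ℝ (treeFun dx dz (Dt t) (w t) (b t) (leaf t)) y‖ :=
          mul_le_mul_of_nonneg_left (norm_sum_le _ _) hTnn
      _ ≤ (T:ℝ)⁻¹ * ∑ _t : Fin T, C * ‖x - y‖ := by
          refine mul_le_mul_of_nonneg_left (Finset.sum_le_sum fun t _ => ?_) hTnn
          refine ((pkg t).2.2.2.2 x y).trans ?_
          exact mul_le_mul_of_nonneg_right (hconst t) (norm_nonneg _)
      _ = (T:ℝ)⁻¹ * ((T:ℝ) * (C * ‖x - y‖)) := by
          rw [Finset.sum_const, Finset.card_univ, Fintype.card_fin, nsmul_eq_mul]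
      _ ≤ C * ‖x - y‖ := by
          rcases eq_or_ne T 0 with hT | hT
          · subst hT; simp [mul_nonneg hC0 (norm_nonneg _)]
          · rw [← mul_assoc, inv_mul_cancel₀ (by exact_mod_cast hT), one_mul]
  refine ⟨?_, hlip⟩
  rw [contDiff_one_iff_fderiv]
  refine ⟨fun x => (hΨ x).differentiableAt, ?_⟩
  have : LipschitzWith (Real.toNNReal C) (fun x => fderiv ℝ (srf dx dz T Dt w b leaf) x) := by
    apply LipschitzWith.of_dist_le_mul
    intro x y
    rw [dist_eq_norm, dist_eq_norm, Real.coe_toNNReal C hC0]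
    exact hlip x y
  exact this.continuous
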